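/- Let x_1, ..., x_n be real numbers such that every subset of size greater than k has negative sum, and suppose exactly one x_i is nonnegative. Then every nonempty subset with nonnegative sum contains that element and has size at most k, so the number of nonnegative-sum subsets is at most C(n-1,k-1) + ... + C(n-1,0) + 1. -/

import Mathlib

open scoped Classical

theorem stmt_19 (n k : ℕ) (x : Fin n → ℝ)
    (h : ∀ S : Finset (Fin n), k < S.card → ∑ i ∈ S, x i < 0)
    (i₀ : Fin n) (hi₀ : 0 ≤ x i₀) (huniq : ∀ j, 0 ≤ x j → j = i₀) :
    (∀ S : Finset (Fin n), S.Nonempty → 0 ≤ ∑ i ∈ S, x i → i₀ ∈ S ∧ S.card ≤ k) ∧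
      (Finset.univ.filter (fun S : Finset (Fin n) => 0 ≤ ∑ i ∈ S, x i)).card ≤
        (∑ i ∈ Finset.range k, (n - 1).choose i) + 1 := by
  have hmain : ∀ S : Finset (Fin n), S.Nonempty → 0 ≤ ∑ i ∈ S, x i → i₀ ∈ S ∧ S.card ≤ k := by
    intro S hS hsum
    constructor
    · by_contra hmem
      have : ∑ i ∈ S, x i < 0 := Finset.sum_neg (fun i hi => by
        by_contra hx
        push_neg at hx
        exact hmem (huniq i hx ▸ hi)) hS
      linarith
    · by_contra hc
      push_neg at hc
      linarith [h S hc]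
  refine ⟨hmain, ?_⟩
  set A := (Finset.range k).biUnion (fun j => Finset.powersetCard j (Finset.univ.erase i₀)) with hA
  have hsub : (Finset.univ.filter (fun S : Finset (Fin n) => 0 ≤ ∑ i ∈ S, x i)) ⊆
      insert ∅ (A.image (fun s => insert i₀ s)) := by
    intro S hS
    simp only [Finset.mem_filter] at hS
    rcases S.eq_empty_or_nonempty with rfl | hne
    · exact Finset.mem_insert_self _ _
    · obtain ⟨hmem, hcard⟩ := hmain S hne hS.2
      refine Finset.mem_insert_of_mem ?_
      refine Finset.mem_image.2 ⟨S.erase i₀, ?_, ?_⟩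
      · refine Finset.mem_biUnion.2 ⟨S.card - 1, ?_, ?_⟩
        · refine Finset.mem_range.2 ?_
          have h1 : 1 ≤ S.card := Finset.one_le_card.2 hne
          omega
        · refine Finset.mem_powersetCard.2 ⟨?_, Finset.card_erase_of_mem hmem⟩
          intro a ha
          exact Finset.mem_erase.2 ⟨(Finset.mem_erase.1 ha).1, Finset.mem_univ a⟩
      · exact Finset.insert_erase hmem
  calc (Finset.univ.filter (fun S : Finset (Fin n) => 0 ≤ ∑ i ∈ S, x i)).card
      ≤ (insert ∅ (A.image (fun s => insert i₀ s))).card := Finset.card_le_card hsub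
    _ ≤ (A.image (fun s => insert i₀ s)).card + 1 := Finset.card_insert_le ∅ (A.image (fun s => insert i₀ s))
    _ ≤ A.card + 1 := by have := Finset.card_image_le (s := A) (f := fun s => insert i₀ s); omega
    _ ≤ (∑ i ∈ Finset.range k, (n - 1).choose i) + 1 := by
        gcongr
        rw [hA, Finset.card_biUnion]
        · apply le_of_eq
          apply Finset.sum_congr rfl
          intro j _
          rw [Finset.card_powersetCard, Finset.card_erase_of_mem (Finset.mem_univ i₀),
            Finset.card_univ, Fintype.card_fin]
        · intro a _ b _ hab
          apply Finset.disjoint_left.2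
          intro s hs hs'
          exact hab (((Finset.mem_powersetCard.1 hs).2).symm.trans (Finset.mem_powersetCard.1 hs').2)
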